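/- Let a1, …, a5 > 0, b1 = (a1 + a2)/(1 + a4·a5), b2 = a2/(1 + a4·a5), b3 = a5/(1 + a4·a5), g(V) = (2·b3·V − b1)/(1 + a3·V) + b1 − b3·V, and H(V) = b1 − b2·(1 + a3·V)·exp(a3·(V + a4·g(V))) − 2·b3·V. Then there exists a unique V* > 0 with H(V*) = 0. (Indeed H(0) = b1 − b2 = a1/(1 + a4·a5) > 0, H is strictly decreasing on (0, ∞), and H(V) → −∞ as V → ∞.) -/

import Mathlib

theorem mpp_voltage_exists_unique
    (a1 a2 a3 a4 a5 b1 b2 b3 : ℝ)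
    (ha1 : 0 < a1) (ha2 : 0 < a2) (ha3 : 0 < a3) (ha4 : 0 < a4) (ha5 : 0 < a5)
    (hb1 : b1 = (a1 + a2) / (1 + a4 * a5))
    (hb2 : b2 = a2 / (1 + a4 * a5))
    (hb3 : b3 = a5 / (1 + a4 * a5))
    (g H : ℝ → ℝ)
    (hg : ∀ V, g V = (2 * b3 * V - b1) / (1 + a3 * V) + b1 - b3 * V)
    (hH : ∀ V, H V = b1 - b2 * (1 + a3 * V) * Real.exp (a3 * (V + a4 * g V)) - 2 * b3 * V) :
    ∃! Vstar : ℝ, 0 < Vstar ∧ H Vstar = 0 := by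
  have hd : (0:ℝ) < 1 + a4 * a5 := by nlinarith
  have hb1p : 0 < b1 := by rw [hb1]; positivity
  have hb2p : 0 < b2 := by rw [hb2]; positivity
  have hb3p : 0 < b3 := by rw [hb3]; positivity
  have hb21 : b2 < b1 := by rw [hb1, hb2]; gcongr; linarith
  have hb3a4 : a4 * b3 < 1 := by
    rw [hb3, ← mul_div_assoc, div_lt_one hd]; linarith
  -- rewrite H as a concrete function
  have hHeq : H = fun V => b1 - b2 * (1 + a3 * V) *
      Real.exp (a3 * (V + a4 * ((2 * b3 * V - b1) / (1 + a3 * V) + b1 - b3 * V))) - 2 * b3 * V :=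
    funext fun V => by rw [hH V, hg V]
  -- derivative of H at every V ≥ 0
  have hderiv : ∀ V : ℝ, 0 ≤ V → HasDerivAt H
      (-(b2 * a3 * Real.exp (a3 * (V + a4 * ((2 * b3 * V - b1) / (1 + a3 * V) + b1 - b3 * V)))
        + b2 * (1 + a3 * V) *
          (Real.exp (a3 * (V + a4 * ((2 * b3 * V - b1) / (1 + a3 * V) + b1 - b3 * V))) *
            (a3 * (1 + a4 * ((2 * b3 * (1 + a3 * V) - (2 * b3 * V - b1) * a3) / (1 + a3 * V) ^ 2
              - b3))))) - 2 * b3) V := by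
    intro V hV
    have hq : (1 + a3 * V) ≠ 0 := by nlinarith
    have hnum : HasDerivAt (fun V : ℝ => 2 * b3 * V - b1) (2 * b3) V := by
      simpa using ((hasDerivAt_id V).const_mul (2 * b3)).sub_const b1
    have hden : HasDerivAt (fun V : ℝ => 1 + a3 * V) a3 V := by
      simpa using ((hasDerivAt_id V).const_mul a3).const_add 1
    have hr : HasDerivAt (fun V : ℝ => (2 * b3 * V - b1) / (1 + a3 * V))
        ((2 * b3 * (1 + a3 * V) - (2 * b3 * V - b1) * a3) / (1 + a3 * V) ^ 2) V :=
      hnum.div hden hq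
    have hgd : HasDerivAt (fun V : ℝ => (2 * b3 * V - b1) / (1 + a3 * V) + b1 - b3 * V)
        ((2 * b3 * (1 + a3 * V) - (2 * b3 * V - b1) * a3) / (1 + a3 * V) ^ 2 - b3) V := by
      exact ((hr.add_const b1).sub ((hasDerivAt_id V).const_mul b3)).congr_deriv (by ring)
    have hE : HasDerivAt (fun V : ℝ => a3 * (V + a4 *
        ((2 * b3 * V - b1) / (1 + a3 * V) + b1 - b3 * V)))
        (a3 * (1 + a4 * ((2 * b3 * (1 + a3 * V) - (2 * b3 * V - b1) * a3) / (1 + a3 * V) ^ 2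
          - b3))) V := by
      exact ((hasDerivAt_id V).add (hgd.const_mul a4)).const_mul a3
    have hexp := hE.exp
    have hmul := ((hden.const_mul b2).mul hexp)
    have hfull := ((hmul.const_sub b1).sub ((hasDerivAt_id V).const_mul (2 * b3)))
    rw [hHeq]
    exact hfull.congr_deriv (by ring)
  -- H is strictly decreasing on [0, ∞)
  have hanti : StrictAntiOn H (Set.Ici 0) := by
    apply strictAntiOn_of_deriv_neg (convex_Ici 0)
    · exact fun x hx => ((hderiv x hx).continuousAt).continuousWithinAt
    · intro x hx
      rw [interior_Ici] at hx
      have hx0 : (0:ℝ) < x := hx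
      rw [(hderiv x hx0.le).deriv]
      have hqpos : (0:ℝ) < 1 + a3 * x := by nlinarith
      have hA : 0 < Real.exp (a3 * (x + a4 *
          ((2 * b3 * x - b1) / (1 + a3 * x) + b1 - b3 * x))) := Real.exp_pos _
      have hnum : 0 < 2 * b3 * (1 + a3 * x) - (2 * b3 * x - b1) * a3 := by nlinarith
      have hratio : 0 < (2 * b3 * (1 + a3 * x) - (2 * b3 * x - b1) * a3) / (1 + a3 * x) ^ 2 :=
        div_pos hnum (by positivity)
      have hE' : 0 < a3 * (1 + a4 * ((2 * b3 * (1 + a3 * x) - (2 * b3 * x - b1) * a3)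
          / (1 + a3 * x) ^ 2 - b3)) := by
        apply mul_pos ha3
        nlinarith
      have h1 : 0 < b2 * a3 * Real.exp (a3 * (x + a4 *
          ((2 * b3 * x - b1) / (1 + a3 * x) + b1 - b3 * x))) := by positivity
      have h2 : 0 < b2 * (1 + a3 * x) * (Real.exp (a3 * (x + a4 *
          ((2 * b3 * x - b1) / (1 + a3 * x) + b1 - b3 * x))) *
          (a3 * (1 + a4 * ((2 * b3 * (1 + a3 * x) - (2 * b3 * x - b1) * a3)
            / (1 + a3 * x) ^ 2 - b3)))) := by
        apply mul_pos (mul_pos hb2p hqpos) (mul_pos hA hE')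
      linarith
  -- value at 0
  have hH0 : H 0 = b1 - b2 := by rw [hH 0, hg 0]; norm_num
  have hH0pos : 0 < H 0 := by rw [hH0]; linarith
  -- a point where H is negative
  set M : ℝ := (b1 + 1) / (2 * b3) with hM
  have hMpos : 0 < M := by positivity
  have h2b3M : 2 * b3 * M = b1 + 1 := by rw [hM]; exact mul_div_cancel₀ (b1 + 1) (by positivity)
  have hHMneg : H M < 0 := by
    rw [hH M]
    have hqM : (0:ℝ) < 1 + a3 * M := by nlinarith
    have : 0 < b2 * (1 + a3 * M) * Real.exp (a3 * (M + a4 * g M)) :=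
      mul_pos (mul_pos hb2p hqM) (Real.exp_pos _)
    linarith
  -- existence via IVT
  have hcont : ContinuousOn H (Set.Icc 0 M) := fun x hx =>
    ((hderiv x hx.1).continuousAt).continuousWithinAt
  have hmem : (0:ℝ) ∈ Set.Ioo (H M) (H 0) := ⟨hHMneg, hH0pos⟩
  obtain ⟨c, hc, hHc⟩ := intermediate_value_Ioo' hMpos.le hcont hmem
  refine ⟨c, ⟨hc.1, hHc⟩, ?_⟩
  rintro y ⟨hy, hHy⟩
  exact hanti.injOn (Set.mem_Ici.mpr hy.le) (Set.mem_Ici.mpr hc.1.le) (hHy.trans hHc.symm)
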